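/- Let ζ ∈ k be a primitive n-th root of unity and m, t positive divisors of n with n ∤ mt and gcd(t, n/m) = 1, so that N = n/gcd(n, mt) = n/m. Fix an H_n(ζ,m,t)-module-algebra structure (σ, δ) on A = k[u]/(u^n − 1) with σ(u) = ζ·u and δ(u) = γ·u^{t+1} for some nonzero γ ∈ k. Let d be any integer with 0 < d < n and m ≡ −dt (mod n), and let δ₀ ∈ k be any scalar satisfying γ·δ₀·(n−t)_{ζ^m} = ζ^{−m} − 1 in case 2m ≠ n (δ₀ arbitrary in case 2m = n). Then there exists an extension (τ, δ') of (σ, δ) to a D(H_n(ζ,m,t))-module-algebra structure on A with τ(u) = ζ^d·u and δ'(u) = δ₀·u^{n+1−t}. -/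

import Mathlib

/-- The `q`-symbol `(s)_w = 1 + w + w² + ⋯ + w^(s-1)`. -/
def qSym {k : Type*} [Field k] (w : k) (s : ℕ) : k := ∑ i ∈ Finset.range s, w ^ i

/-- An `H_n(ζ,m,t)`-module-algebra structure on `A`, given by the action `σ` of the
grouplike generator `y` and the action `δ` of the `(y^m,1)`-skew primitive `x`;
here `N` is the nilpotency order of `x`. -/
def IsHAction {k A : Type*} [Field k] [CommRing A] [Algebra k A]
    (n m t N : ℕ) (ζ : k) (σ : A ≃ₐ[k] A) (δ : A →ₗ[k] A) : Prop :=
  σ ^ n = 1 ∧ δ 1 = 0 ∧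
  (∀ a c : A, δ (a * c) = (σ ^ m) a * δ c + δ a * c) ∧
  δ ^ N = 0 ∧
  σ.toLinearMap ∘ₗ δ = ζ ^ t • (δ ∘ₗ σ.toLinearMap)

/-- The data of an extension of an `H_n(ζ,m,t)`-module-algebra structure `(σ, δ)` on `A`
to a `D(H_n(ζ,m,t))`-module-algebra structure, given by the action `τ` of the grouplike
`Y` and the action `δ'` of the `(1,Y^t)`-skew primitive `X` of the Drinfel'd double. -/
def IsDHExtension {k A : Type*} [Field k] [CommRing A] [Algebra k A]
    (n m t N : ℕ) (ζ : k) (σ : A ≃ₐ[k] A) (δ : A →ₗ[k] A)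
    (τ : A ≃ₐ[k] A) (δ' : A →ₗ[k] A) : Prop :=
  τ ^ n = 1 ∧ δ' 1 = 0 ∧
  (∀ a c : A, δ' (a * c) = a * δ' c + δ' a * (τ ^ t) c) ∧
  δ' ^ N = 0 ∧
  τ.toLinearMap ∘ₗ δ' = ζ ^ m • (δ' ∘ₗ τ.toLinearMap) ∧
  σ * τ = τ * σ ∧
  δ ∘ₗ τ.toLinearMap = ζ ^ m • (τ.toLinearMap ∘ₗ δ) ∧
  σ.toLinearMap ∘ₗ δ' = (ζ⁻¹ ^ t) • (δ' ∘ₗ σ.toLinearMap) ∧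
  δ ∘ₗ δ' - δ' ∘ₗ δ = (τ ^ t : A ≃ₐ[k] A).toLinearMap - (σ ^ m : A ≃ₐ[k] A).toLinearMap

lemma qSym_zero {k : Type*} [Field k] (w : k) : qSym w 0 = 0 := by simp [qSym]

lemma qSym_one' {k : Type*} [Field k] (w : k) : qSym w 1 = 1 := by simp [qSym]

lemma qSym_succ {k : Type*} [Field k] (w : k) (s : ℕ) :
    qSym w (s + 1) = qSym w s + w ^ s := Finset.sum_range_succ _ _

lemma qSym_succ' {k : Type*} [Field k] (w : k) (s : ℕ) :
    qSym w (s + 1) = w * qSym w s + 1 := geom_sum_succ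

lemma qSym_add {k : Type*} [Field k] (w : k) (a b : ℕ) :
    qSym w (a + b) = qSym w a + w ^ a * qSym w b := by
  induction b with
  | zero => simp [qSym_zero]
  | succ b ih =>
      rw [← add_assoc, qSym_succ, ih, qSym_succ, mul_add, pow_add]
      ring

lemma sub_one_mul_qSym {k : Type*} [Field k] (w : k) (s : ℕ) :
    (w - 1) * qSym w s = w ^ s - 1 := by
  rw [mul_comm]; exact geom_sum_mul w s

/-- Abstract scalar identity behind the commutator relation. -/
lemma star_abs {k : Type*} [Field k] (γ δ₀ w q E F B Qi Qti a1 a2 a3 a4 : k)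
    (hq1 : q ≠ 1) (hw1 : w ≠ 1)
    (hQiE : Qi * E = 1) (hQti : Qti * (F * E) = 1) (hBF : B * F = 1)
    (h1 : (q - 1) * a1 = Qi - 1) (h2 : (w - 1) * a2 = E * B - 1)
    (h3 : (w - 1) * a3 = E - 1) (h4 : (q - 1) * a4 = Qti - 1)
    (hcase : E * E = 1 ∨ γ * δ₀ * (B - 1) = (q - 1) * (w - 1)) :
    δ₀ * a1 * (γ * a2) - γ * a3 * (δ₀ * a4) = Qi - E := by
  have hq1' : q - 1 ≠ 0 := sub_ne_zero.mpr hq1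
  have hw1' : w - 1 ≠ 0 := sub_ne_zero.mpr hw1
  have hE0 : E ≠ 0 := fun h => one_ne_zero (by rw [← hQiE, h, mul_zero])
  have hF0 : F ≠ 0 := fun h => one_ne_zero (by rw [← hBF, h, mul_zero])
  have hQi : Qi = E⁻¹ := eq_inv_of_mul_eq_one_left hQiE
  have hB : B = F⁻¹ := eq_inv_of_mul_eq_one_left hBF
  have hQt : Qti = (F * E)⁻¹ := eq_inv_of_mul_eq_one_left hQti
  apply mul_left_cancel₀ (mul_ne_zero hq1' hw1')
  have key : γ * δ₀ * ((Qi - 1) * (E * B - 1) - (E - 1) * (Qti - 1))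
      = (q - 1) * (w - 1) * (Qi - E) := by
    rcases hcase with hEE | hS
    · have hEinv : E⁻¹ = E := inv_eq_of_mul_eq_one_right hEE
      rw [hQi, hQt, hB, mul_inv, hEinv]
      ring
    · rw [hQi, hQt, hB, mul_inv]
      have expand : (E⁻¹ - 1) * (E * F⁻¹ - 1) - (E - 1) * (F⁻¹ * E⁻¹ - 1)
          = (E - E⁻¹) * (1 - F⁻¹) := by
        field_simp
        ring
      rw [hB] at hS
      rw [expand]
      calc γ * δ₀ * ((E - E⁻¹) * (1 - F⁻¹))
          = (E⁻¹ - E) * (γ * δ₀ * (F⁻¹ - 1)) := by ring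
        _ = (E⁻¹ - E) * ((q - 1) * (w - 1)) := by rw [hS]
        _ = (q - 1) * (w - 1) * (E⁻¹ - E) := by ring
  calc (q - 1) * (w - 1) * (δ₀ * a1 * (γ * a2) - γ * a3 * (δ₀ * a4))
      = γ * δ₀ * (((q - 1) * a1) * ((w - 1) * a2) - ((w - 1) * a3) * ((q - 1) * a4)) := by
        ring
    _ = γ * δ₀ * ((Qi - 1) * (E * B - 1) - (E - 1) * (Qti - 1)) := by rw [h1, h2, h3, h4]
    _ = (q - 1) * (w - 1) * (Qi - E) := key

/-- Sufficiency part of Theorem 4.17: given `0 < d < n` with `m ≡ -dt (mod n)` and any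
`δ₀ ∈ k` satisfying `γ·δ₀·(n-t)_{ζ^m} = ζ^{-m} - 1` when `2m ≠ n` (arbitrary when
`2m = n`), the `H_n(ζ,m,t)`-module-algebra structure on `A = k[u]/(uⁿ - 1)` extends to a
`D(H_n(ζ,m,t))`-module-algebra structure with `τ(u) = ζ^d·u`, `δ'(u) = δ₀·u^(n+1-t)`. -/
theorem stmt_11 (k : Type*) [Field k] [IsAlgClosed k] [CharZero k]
    (n : ℕ) (hn : 0 < n) (ζ : k) (hζ : IsPrimitiveRoot ζ n)
    (m t : ℕ) (hm0 : 0 < m) (ht0 : 0 < t) (hmn : m ∣ n) (htn : t ∣ n)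
    (hnmt : ¬ n ∣ m * t) (hcop : Nat.gcd t (n / m) = 1)
    (A : Type*) [CommRing A] [Algebra k A]
    (u : A) (b : Module.Basis (Fin n) k A) (hb : ∀ i : Fin n, b i = u ^ (i : ℕ))
    (hu : u ^ n = 1)
    (σ : A ≃ₐ[k] A) (δ : A →ₗ[k] A)
    (hact : IsHAction n m t (n / Nat.gcd n (m * t)) ζ σ δ)
    (γ : k) (hγ : γ ≠ 0) (hσu : σ u = ζ • u) (hδu : δ u = γ • u ^ (t + 1))
    (d : ℕ) (hd0 : 0 < d) (hdn : d < n) (hmd : n ∣ (m + d * t))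
    (δ₀ : k) (hδ₀ : 2 * m ≠ n → γ * δ₀ * qSym (ζ ^ m) (n - t) = ζ⁻¹ ^ m - 1) :
    ∃ (τ : A ≃ₐ[k] A) (δ' : A →ₗ[k] A),
      IsDHExtension n m t (n / Nat.gcd n (m * t)) ζ σ δ τ δ' ∧
      τ u = ζ ^ d • u ∧ δ' u = δ₀ • u ^ (n + 1 - t) := by
  obtain ⟨hσn, hδ1, hLeib, -, -⟩ := hact
  have hζn : ζ ^ n = 1 := hζ.pow_eq_one
  have hζ0 : ζ ≠ 0 := hζ.ne_zero hn.ne'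
  have htn' : t ≤ n := Nat.le_of_dvd hn htn
  have hmlt : m < n := by
    rcases lt_or_eq_of_le (Nat.le_of_dvd hn hmn) with h | h
    · exact h
    · exact absurd (h ▸ Dvd.intro t rfl) hnmt
  set w : k := ζ ^ m with hw
  set q : k := ζ⁻¹ ^ m with hqdef
  have hw0 : w ≠ 0 := pow_ne_zero _ hζ0
  have hw1 : w ≠ 1 := hζ.pow_ne_one_of_pos_of_lt hm0.ne' hmlt
  have hqw : q * w = 1 := by
    rw [hqdef, hw, inv_pow, inv_mul_cancel₀ hw0]
  have hq0 : q ≠ 0 := left_ne_zero_of_mul_eq_one hqw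
  have hq1 : q ≠ 1 := fun h => hw1 (by rw [h, one_mul] at hqw; exact hqw)
  have hwn : w ^ n = 1 := by rw [hw, ← pow_mul, mul_comm, pow_mul, hζn, one_pow]
  have hqn : q ^ n = 1 := by
    have h := mul_pow q w n
    rw [hqw, one_pow, hwn, mul_one] at h
    exact h.symm
  have hβ : ζ ^ m * ζ ^ (d * t) = 1 := by
    rw [← pow_add]; exact (hζ.pow_eq_one_iff_dvd _).mpr hmd
  have hdtq : ζ ^ (d * t) = q := by
    apply mul_right_cancel₀ hw0
    rw [hqw, hw, mul_comm]
    exact hβ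
  have hζdn : ζ ^ (d * n) = 1 := by rw [mul_comm, pow_mul, hζn, one_pow]
  have hz2 : ζ ^ (d * (n - t)) = ζ ^ m := by
    apply mul_right_cancel₀ (pow_ne_zero (d * t) hζ0)
    rw [← pow_add, ← Nat.mul_add, Nat.sub_add_cancel htn', hζdn]
    exact hβ.symm
  have hz3 : ζ ^ (n - t) = ζ⁻¹ ^ t := by
    apply mul_right_cancel₀ (pow_ne_zero t hζ0)
    rw [← pow_add, Nat.sub_add_cancel htn', hζn, inv_pow, inv_mul_cancel₀ (pow_ne_zero t hζ0)]
  -- basic formulas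
  have Fu : ∀ s : ℕ, u ^ (s + n) = u ^ s := by
    intro s; rw [pow_add, hu, mul_one]
  have Fσ1 : ∀ s : ℕ, σ (u ^ s) = ζ ^ s • u ^ s := by
    intro s; rw [map_pow, hσu, smul_pow]
  have Fσ : ∀ e s : ℕ, (σ ^ e) (u ^ s) = ζ ^ (e * s) • u ^ s := by
    intro e
    induction e with
    | zero => intro s; simp
    | succ e ih =>
        intro s
        rw [pow_succ, AlgEquiv.mul_apply, Fσ1, map_smul, ih, smul_smul, ← pow_add,
          show s + e * s = (e + 1) * s from by ring]
  have Fδ : ∀ s : ℕ, δ (u ^ s) = (γ * qSym w s) • u ^ (t + s) := by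
    intro s
    induction s with
    | zero => simp [qSym_zero, hδ1]
    | succ s ih =>
        have h1 : u ^ (s + 1) = u * u ^ s := by rw [pow_succ, mul_comm]
        have hσm : (σ ^ m) u = ζ ^ m • u := by simpa using Fσ m 1
        rw [h1, hLeib, ih, hδu, hσm, smul_mul_assoc, mul_smul_comm, smul_smul,
          smul_mul_assoc, ← pow_add]
        have e3 : u * u ^ (t + s) = u ^ (t + (s + 1)) := by
          rw [← pow_succ', show t + s + 1 = t + (s + 1) from by omega]
        have e4 : t + 1 + s = t + (s + 1) := by omega
        rw [e3, e4, ← add_smul]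
        congr 1
        rw [qSym_succ', ← hw]
        ring
  -- definition of δ'
  set δ' : A →ₗ[k] A := b.constr k (fun i => (δ₀ * qSym q (i : ℕ)) • u ^ ((i : ℕ) + (n - t)))
    with hδ'def
  have hqSymn : qSym q n = 0 := by
    have h := sub_one_mul_qSym q n
    rw [hqn, sub_self] at h
    rcases mul_eq_zero.mp h with h' | h'
    · exact absurd (sub_eq_zero.mp h') hq1
    · exact h'
  have Fδ' : ∀ s : ℕ, δ' (u ^ s) = (δ₀ * qSym q s) • u ^ (s + (n - t)) := by
    intro s
    induction s using Nat.strong_induction_on with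
    | _ s ih =>
      rcases lt_or_ge s n with h | h
      · have hbs : u ^ s = b ⟨s, h⟩ := (hb ⟨s, h⟩).symm
        rw [hbs, hδ'def, b.constr_basis]
      · obtain ⟨r, rfl⟩ : ∃ r, s = r + n := ⟨s - n, by omega⟩
        rw [Fu, ih r (by omega), qSym_add, hqSymn, mul_zero, add_zero]
        congr 1
        have he : r + n + (n - t) = (r + (n - t)) + n := by omega
        rw [he, Fu]
  -- tau
  have Fτt : ∀ s : ℕ, ((σ ^ d) ^ t) (u ^ s) = q ^ s • u ^ s := by
    intro s
    rw [← pow_mul, Fσ, ← hdtq, ← pow_mul, mul_comm (d * t) s, pow_mul, pow_mul]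
  refine ⟨σ ^ d, δ', ⟨?_, ?_, ?_, ?_, ?_, ?_, ?_, ?_, ?_⟩, ?_, ?_⟩
  · -- τ^n = 1
    rw [pow_right_comm, hσn, one_pow]
  · -- δ' 1 = 0
    have h := Fδ' 0
    simpa [qSym_zero] using h
  · -- Leibniz
    have hbaseLeib : ∀ i j : ℕ,
        δ' (u ^ i * u ^ j) = u ^ i * δ' (u ^ j) + δ' (u ^ i) * ((σ ^ d) ^ t) (u ^ j) := by
      intro i j
      rw [← pow_add, Fδ', Fδ', Fδ', Fτt]
      rw [mul_smul_comm, smul_mul_assoc, mul_smul_comm, smul_smul, ← pow_add, ← pow_add]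
      have e1 : i + (j + (n - t)) = (i + j) + (n - t) := by omega
      have e2 : i + (n - t) + j = (i + j) + (n - t) := by omega
      rw [e1, e2, ← add_smul]
      congr 1
      rw [add_comm i j, qSym_add]
      ring
    have key : (LinearMap.mul k A).compr₂ δ' =
        (LinearMap.mul k A).compl₂ δ' +
          ((LinearMap.mul k A).comp δ').compl₂ ((σ ^ d) ^ t : A ≃ₐ[k] A).toLinearMap := by
      apply b.ext; intro i
      apply b.ext; intro j
      simp only [LinearMap.compr₂_apply, LinearMap.compl₂_apply, LinearMap.add_apply,
        LinearMap.comp_apply, LinearMap.mul_apply', AlgEquiv.toLinearMap_apply, hb]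
      exact hbaseLeib i j
    intro a c
    have h := LinearMap.congr_fun (LinearMap.congr_fun key a) c
    simpa only [LinearMap.compr₂_apply, LinearMap.compl₂_apply, LinearMap.add_apply,
      LinearMap.comp_apply, LinearMap.mul_apply', AlgEquiv.toLinearMap_apply] using h
  · -- nilpotency
    have hNval : n / Nat.gcd n (m * t) = n / m := by
      obtain ⟨c, hc⟩ := hmn
      have hcn : n / m = c := by rw [hc]; exact Nat.mul_div_cancel_left c hm0
      rw [hcn] at hcop
      have hg : Nat.gcd n (m * t) = m := by
        rw [hc, Nat.gcd_mul_left, Nat.gcd_comm, hcop, mul_one]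
      rw [hg]
    rw [hNval]
    set M := n / m with hM
    have hM0 : 0 < M := Nat.div_pos (Nat.le_of_dvd hn hmn) hm0
    haveI : NeZero M := ⟨hM0.ne'⟩
    have hMdvd : M ∣ n := Nat.div_dvd_of_dvd hmn
    have hqM : q ^ M = 1 := by
      have hmM : m * M = n := Nat.mul_div_cancel' hmn
      rw [hqdef, ← pow_mul, hmM, inv_pow, hζn, inv_one]
    have hqzero : ∀ s : ℕ, M ∣ s → qSym q s = 0 := by
      rintro s ⟨c, rfl⟩
      have hqs : q ^ (M * c) = 1 := by rw [pow_mul, hqM, one_pow]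
      have h := sub_one_mul_qSym q (M * c)
      rw [hqs, sub_self] at h
      rcases mul_eq_zero.mp h with h' | h'
      · exact absurd (sub_eq_zero.mp h') hq1
      · exact h'
    have Fiter : ∀ (j s : ℕ), (δ' ^ j) (u ^ s) =
        (δ₀ ^ j * ∏ l ∈ Finset.range j, qSym q (s + l * (n - t))) • u ^ (s + j * (n - t)) := by
      intro j
      induction j with
      | zero => intro s; simp
      | succ j ih =>
          intro s
          rw [pow_succ', Module.End.mul_apply δ' (δ' ^ j), ih s, map_smul, Fδ', smul_smul]
          congr 1
          · rw [Finset.prod_range_succ]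
            ring
          · ring
    apply b.ext; intro i
    rw [hb, Fiter, LinearMap.zero_apply]
    have hex : ∃ l, l < M ∧ qSym q ((i : ℕ) + l * (n - t)) = 0 := by
      set tu : (ZMod M)ˣ := ZMod.unitOfCoprime t hcop with htudef
      set x : ZMod M := (((i : ℕ) : ZMod M)) * ↑tu⁻¹ with hx
      refine ⟨x.val, ZMod.val_lt x, hqzero _ ?_⟩
      apply (ZMod.natCast_eq_zero_iff _ M).mp
      push_cast [Nat.cast_sub htn']
      have hn0 : ((n : ℕ) : ZMod M) = 0 := (ZMod.natCast_eq_zero_iff n M).mpr hMdvd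
      have hval : ((x.val : ℕ) : ZMod M) = x := (ZMod.natCast_val x).trans (ZMod.cast_id _ _)
      rw [hn0, hval, hx]
      have htu' : ((tu : (ZMod M)ˣ) : ZMod M) = (t : ZMod M) := ZMod.coe_unitOfCoprime t hcop
      rw [← htu']
      have hinv : ((tu⁻¹ : (ZMod M)ˣ) : ZMod M) * ((tu : (ZMod M)ˣ) : ZMod M) = 1 :=
        Units.inv_mul tu
      linear_combination (-(((i : ℕ) : ZMod M))) * hinv
    obtain ⟨l₀, hl₀M, hl₀⟩ := hex
    rw [Finset.prod_eq_zero (Finset.mem_range.mpr hl₀M) hl₀, mul_zero, zero_smul]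
  · -- τ ∘ δ' = ζ^m (δ' ∘ τ)
    apply b.ext; intro i
    simp only [hb, LinearMap.comp_apply, LinearMap.smul_apply, AlgEquiv.toLinearMap_apply,
      Fδ', Fσ, map_smul, smul_smul]
    congr 1
    rw [Nat.mul_add, pow_add, hz2]
    ring
  · -- σ τ = τ σ
    exact ((Commute.refl σ).pow_right d).eq
  · -- δ ∘ τ = ζ^m (τ ∘ δ)
    apply b.ext; intro i
    simp only [hb, LinearMap.comp_apply, LinearMap.smul_apply, AlgEquiv.toLinearMap_apply,
      Fδ, Fσ, map_smul, smul_smul]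
    congr 1
    rw [Nat.mul_add d t (i : ℕ), pow_add, hdtq, ← hw]
    linear_combination (-(γ * qSym w (i : ℕ) * ζ ^ (d * (i : ℕ)))) * hqw
  · -- σ ∘ δ' = ζ⁻¹^t (δ' ∘ σ)
    apply b.ext; intro i
    simp only [hb, LinearMap.comp_apply, LinearMap.smul_apply, AlgEquiv.toLinearMap_apply,
      Fδ', Fσ1, map_smul, smul_smul]
    congr 1
    rw [pow_add, hz3]
    ring
  · -- commutator
    apply b.ext; intro i
    simp only [hb, LinearMap.sub_apply, LinearMap.comp_apply, AlgEquiv.toLinearMap_apply,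
      Fδ', Fδ, Fτt, Fσ, map_smul, smul_smul]
    have he1 : t + ((i : ℕ) + (n - t)) = (i : ℕ) + n := by omega
    have he2 : t + (i : ℕ) + (n - t) = (i : ℕ) + n := by omega
    rw [he1, he2, Fu, ← sub_smul, ← sub_smul]
    congr 1
    rw [pow_mul ζ m (i : ℕ), ← hw]
    -- scalar identity via star_abs
    have star : δ₀ * qSym q (i : ℕ) * (γ * qSym w ((i : ℕ) + (n - t)))
        - γ * qSym w (i : ℕ) * (δ₀ * qSym q (t + (i : ℕ))) = q ^ (i : ℕ) - w ^ (i : ℕ) := by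
      refine star_abs γ δ₀ w q (w ^ (i : ℕ)) (w ^ t) (w ^ (n - t)) (q ^ (i : ℕ))
        (q ^ (t + (i : ℕ))) _ _ _ _ hq1 hw1 ?_ ?_ ?_ ?_ ?_ ?_ ?_ ?_
      · rw [← mul_pow, hqw, one_pow]
      · rw [← pow_add, ← mul_pow, hqw, one_pow]
      · rw [← pow_add, Nat.sub_add_cancel htn', hwn]
      · exact sub_one_mul_qSym q _
      · rw [← pow_add]
        exact sub_one_mul_qSym w _
      · exact sub_one_mul_qSym w _
      · exact sub_one_mul_qSym q _
      · by_cases h2 : 2 * m = n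
        · left
          rw [← pow_add, hw, ← pow_mul]
          have hmi : m * ((i : ℕ) + (i : ℕ)) = n * (i : ℕ) := by
            calc m * ((i : ℕ) + (i : ℕ)) = 2 * m * (i : ℕ) := by ring
              _ = n * (i : ℕ) := by rw [h2]
          rw [hmi, pow_mul, hζn, one_pow]
        · right
          have hS := hδ₀ h2
          calc γ * δ₀ * (w ^ (n - t) - 1)
              = γ * δ₀ * ((w - 1) * qSym w (n - t)) := by rw [sub_one_mul_qSym]
            _ = (w - 1) * (γ * δ₀ * qSym w (n - t)) := by ring
            _ = (w - 1) * (q - 1) := by rw [hS]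
            _ = (q - 1) * (w - 1) := by ring
    linear_combination star
  · -- τ u = ζ^d • u
    have h := Fσ d 1
    simpa using h
  · -- δ' u = δ₀ • u^(n+1-t)
    have h := Fδ' 1
    rw [pow_one, qSym_one', mul_one] at h
    rw [h, show 1 + (n - t) = n + 1 - t from by omega]
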